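/- Let H be a random t×r complex matrix with E[‖H‖_F²] < ∞ whose distribution is absolutely continuous with respect to Lebesgue measure on ℂ^{t×r}. Then for every R ∈ ℝ, the infimum of P[log det(I_r + Hᴴ Q H) < R] over the compact set U = {Q ⪰ 0 : tr(Q) ≤ ρ} of t×t positive semidefinite matrices is attained, i.e., the infimum is a minimum. -/

import Mathlib

open Matrix
open scoped ComplexOrder

noncomputable section

/-- The Frobenius norm of a complex matrix. -/
def frob {m k : Type*} [Fintype m] [Fintype k] (A : Matrix m k ℂ) : ℝ :=
  Real.sqrt (∑ i, ∑ j, ‖A i j‖ ^ 2)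

end

open MeasureTheory ProbabilityTheory

section Aux

variable {t r : ℕ}

private lemma diag_facts' {Q : Matrix (Fin t) (Fin t) ℂ} (hQ : Q.PosSemidef) (i : Fin t) :
    0 ≤ (Q i i).re ∧ (Q i i).im = 0 := by
  have h := hQ.dotProduct_mulVec_nonneg (Pi.single i 1)
  have hs : star ((Pi.single i 1 : Fin t → ℂ)) = (Pi.single i 1 : Fin t → ℂ) := by
    funext k; simp [Pi.single_apply, apply_ite (star : ℂ → ℂ)]
  rw [hs, mulVec_single, single_dotProduct] at h
  rw [Complex.le_def] at h
  simp only [Pi.smul_apply, Matrix.col_apply, MulOpposite.smul_eq_mul_unop, MulOpposite.unop_op,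
    one_mul, mul_one, Complex.zero_re, Complex.zero_im] at h
  exact ⟨h.1, h.2.symm⟩

private lemma entry_bound' {Q : Matrix (Fin t) (Fin t) ℂ} (hQ : Q.PosSemidef)
    {ρ : ℝ} (hρ : 0 ≤ ρ) (htr : Q.trace.re ≤ ρ) (i j : Fin t) :
    ‖Q i j‖ ≤ ρ := by
  have hdiag := fun k => diag_facts' hQ k
  have htr' : Q.trace.re = ∑ k, (Q k k).re := by
    simp [Matrix.trace, Matrix.diag, Complex.re_sum]
  have hsum : ∀ s : Finset (Fin t), (∑ k ∈ s, (Q k k).re) ≤ ρ := by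
    intro s
    refine le_trans ?_ htr
    rw [htr']
    exact Finset.sum_le_sum_of_subset_of_nonneg (Finset.subset_univ s)
      (fun k _ _ => (hdiag k).1)
  by_cases hij : Q i j = 0
  · simp [hij, hρ]
  rcases eq_or_ne i j with rfl | hne
  · have habs : ‖Q i i‖ = (Q i i).re := by
      rw [Complex.norm_def, Complex.normSq_apply, (hdiag i).2]
      rw [mul_zero, add_zero, ← Real.sqrt_sq (hdiag i).1, Real.sqrt_sq (hdiag i).1,
        Real.sqrt_eq_iff_eq_sq] <;> nlinarith [(hdiag i).1]
    rw [habs]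
    calc (Q i i).re = ∑ k ∈ {i}, (Q k k).re := by simp
    _ ≤ ρ := hsum _
  · set a : ℝ := ‖Q i j‖ with ha
    have ha0 : 0 < a := by simpa [ha] using norm_pos_iff.mpr hij
    set c : ℂ := -(starRingEnd ℂ (Q i j)) / (a : ℂ) with hc
    have h := hQ.dotProduct_mulVec_nonneg (Pi.single i 1 + Pi.single j c)
    have hs : star ((Pi.single i 1 : Fin t → ℂ) + (Pi.single j c : Fin t → ℂ))
        = (Pi.single i 1 : Fin t → ℂ) + (Pi.single j (starRingEnd ℂ c) : Fin t → ℂ) := by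
      funext k
      simp [Pi.single_apply, apply_ite (star : ℂ → ℂ)]
    rw [hs, mulVec_add, mulVec_single, mulVec_single, dotProduct_add, add_dotProduct,
      add_dotProduct, single_dotProduct, single_dotProduct, single_dotProduct,
      single_dotProduct] at h
    simp only [Pi.smul_apply, Matrix.col_apply, MulOpposite.smul_eq_mul_unop, MulOpposite.unop_op,
      one_mul, mul_one] at h
    have hji : Q j i = starRingEnd ℂ (Q i j) := by
      rw [← hQ.1.apply i j, starRingEnd_apply, star_star]
    have hkey : Q i i + starRingEnd ℂ c * Q j i
        + (Q i j * c + starRingEnd ℂ c * (Q j j * c))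
        = Q i i + Q j j - 2 * (a:ℂ) := by
      rw [hji, hc]
      have hcc : (starRingEnd ℂ) (Q i j) * Q i j = ((a:ℂ))^2 := by
        rw [mul_comm, Complex.mul_conj]
        norm_cast
        rw [ha, Complex.sq_norm]
      have hca : (a:ℂ) ≠ 0 := by exact_mod_cast ha0.ne'
      rw [map_div₀, map_neg, Complex.conj_conj, Complex.conj_ofReal]
      field_simp [map_div₀, map_neg, Complex.conj_conj]
      ring_nf
      linear_combination (Q j j - 2*(a:ℂ)) * hcc
    rw [hkey, Complex.le_def] at h
    have h1 := h.1
    simp only [Complex.add_re, Complex.sub_re, Complex.mul_re, Complex.ofReal_re,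
      Complex.ofReal_im, Complex.zero_re] at h1
    have h2 : (Q i i).re + (Q j j).re ≤ ρ := by
      have := hsum {i, j}
      rwa [Finset.sum_pair hne] at this
    norm_num at h1
    linarith

private lemma isCompact_U' (ρ : ℝ) (hρ : 0 ≤ ρ) :
    IsCompact {Q : Fin t → Fin t → ℂ |
      (Matrix.of Q).PosSemidef ∧ (Matrix.of Q).trace.re ≤ ρ} := by
  rw [Metric.isCompact_iff_isClosed_bounded]
  constructor
  · have h1 : IsClosed {Q : Fin t → Fin t → ℂ | (Matrix.of Q)ᴴ = Matrix.of Q} :=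
      isClosed_eq (continuous_id.matrix_conjTranspose) continuous_id
    have h2 : ∀ x : Fin t → ℂ, IsClosed {Q : Fin t → Fin t → ℂ |
        0 ≤ star x ⬝ᵥ (Matrix.of Q) *ᵥ x} := by
      intro x
      have hc : Continuous fun Q : Fin t → Fin t → ℂ => star x ⬝ᵥ (Matrix.of Q) *ᵥ x :=
        continuous_const.dotProduct (continuous_id.matrix_mulVec continuous_const)
      have hset : {Q : Fin t → Fin t → ℂ | 0 ≤ star x ⬝ᵥ (Matrix.of Q) *ᵥ x}
          = {Q | 0 ≤ (star x ⬝ᵥ (Matrix.of Q) *ᵥ x).re}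
            ∩ {Q | (star x ⬝ᵥ (Matrix.of Q) *ᵥ x).im = 0} := by
        ext Q
        simp only [Set.mem_setOf_eq, Set.mem_inter_iff, Complex.le_def, Complex.zero_re,
          Complex.zero_im]
        tauto
      rw [hset]
      exact (isClosed_le continuous_const (Complex.continuous_re.comp hc)).inter
        (isClosed_eq (Complex.continuous_im.comp hc) continuous_const)
    have h3 : IsClosed {Q : Fin t → Fin t → ℂ | (Matrix.of Q).trace.re ≤ ρ} :=
      isClosed_le (Complex.continuous_re.comp (continuous_id.matrix_trace)) continuous_const
    have heq : {Q : Fin t → Fin t → ℂ | (Matrix.of Q).PosSemidef ∧ (Matrix.of Q).trace.re ≤ ρ}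
        = ({Q : Fin t → Fin t → ℂ | (Matrix.of Q)ᴴ = Matrix.of Q}
            ∩ ⋂ x : Fin t → ℂ, {Q | 0 ≤ star x ⬝ᵥ (Matrix.of Q) *ᵥ x})
          ∩ {Q : Fin t → Fin t → ℂ | (Matrix.of Q).trace.re ≤ ρ} := by
      ext Q
      simp only [Set.mem_setOf_eq, Set.mem_inter_iff, Set.mem_iInter]
      exact ⟨fun h => ⟨⟨h.1.1, fun x => h.1.dotProduct_mulVec_nonneg x⟩, h.2⟩, fun h => ⟨Matrix.PosSemidef.of_dotProduct_mulVec_nonneg h.1.1 h.1.2, h.2⟩⟩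
    rw [heq]
    exact ((h1.inter (isClosed_iInter h2)).inter h3)
  · apply Bornology.IsBounded.subset
      (Metric.isBounded_closedBall (x := (0 : Fin t → Fin t → ℂ)) (r := ρ))
    intro Q hQ
    rw [Metric.mem_closedBall, dist_pi_le_iff hρ]
    intro i
    rw [dist_pi_le_iff hρ]
    intro j
    rw [dist_eq_norm, Pi.zero_apply, Pi.zero_apply, sub_zero]
    exact entry_bound' hQ.1 hρ hQ.2 i j

/-- The real part of `det (1 + Aᴴ Q A)`. -/
noncomputable def fdet (Q : Matrix (Fin t) (Fin t) ℂ) (A : Fin t → Fin r → ℂ) : ℝ :=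
  (((1 : Matrix (Fin r) (Fin r) ℂ) + (Matrix.of A)ᴴ * Q * Matrix.of A).det).re

private lemma continuous_fdet_Q (A : Fin t → Fin r → ℂ) :
    Continuous fun Q : Fin t → Fin t → ℂ => fdet (Matrix.of Q) A := by
  unfold fdet
  exact Complex.continuous_re.comp
    ((continuous_const.add ((continuous_const.matrix_mul continuous_id).matrix_mul
      continuous_const)).matrix_det)

private lemma continuous_fdet_A (Q : Matrix (Fin t) (Fin t) ℂ) :
    Continuous fun A : Fin t → Fin r → ℂ => fdet Q A := by
  unfold fdet
  exact Complex.continuous_re.comp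
    ((continuous_const.add ((continuous_id.matrix_conjTranspose.matrix_mul
      continuous_const).matrix_mul continuous_id)).matrix_det)

private lemma fdet_pos {Q : Matrix (Fin t) (Fin t) ℂ} (hQ : Q.PosSemidef)
    (A : Fin t → Fin r → ℂ) : 0 < fdet Q A := by
  have h2 : ((Matrix.of A)ᴴ * Q * Matrix.of A).PosSemidef :=
    hQ.conjTranspose_mul_mul_same (Matrix.of A)
  have h3 : ((1 : Matrix (Fin r) (Fin r) ℂ) + (Matrix.of A)ᴴ * Q * Matrix.of A).PosDef :=
    Matrix.PosDef.add_posSemidef Matrix.PosDef.one h2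
  have h4 := h3.det_pos
  rw [Complex.lt_def] at h4
  simpa [fdet] using h4.1

end Aux

/-- Existence of an optimal input covariance matrix: if `H` is a random `t×r`
complex matrix with `E[‖H‖_F²] < ∞` whose law is absolutely continuous with
respect to the Lebesgue measure, then for every `R` the infimum of
`P[log det(I_r + Hᴴ Q H) < R]` over `{Q ⪰ 0 : tr(Q) ≤ ρ}` is attained. -/
theorem exists_min_outage {t r : ℕ} {Ω : Type} [MeasureSpace Ω]
    [IsProbabilityMeasure (ℙ : Measure Ω)]
    (H : Ω → (Fin t → Fin r → ℂ)) (hmeas : Measurable H)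
    (hmom : Integrable (fun ω => frob (Matrix.of (H ω)) ^ 2) ℙ)
    (habs : Measure.map H ℙ ≪ (volume : Measure (Fin t → Fin r → ℂ)))
    (ρ : ℝ) (hρ : 0 < ρ) (R : ℝ) :
    ∃ Q : Matrix (Fin t) (Fin t) ℂ, Q.PosSemidef ∧ Q.trace.re ≤ ρ ∧
      ∀ Q' : Matrix (Fin t) (Fin t) ℂ, Q'.PosSemidef → Q'.trace.re ≤ ρ →
        (ℙ : Measure Ω) {ω |
            Real.log (((1 : Matrix (Fin r) (Fin r) ℂ)
              + (Matrix.of (H ω))ᴴ * Q * Matrix.of (H ω)).det).re < R}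
          ≤ (ℙ : Measure Ω) {ω |
            Real.log (((1 : Matrix (Fin r) (Fin r) ℂ)
              + (Matrix.of (H ω))ᴴ * Q' * Matrix.of (H ω)).det).re < R} := by
  classical
  set U : Set (Fin t → Fin t → ℂ) :=
    {Q : Fin t → Fin t → ℂ | (Matrix.of Q).PosSemidef ∧ (Matrix.of Q).trace.re ≤ ρ} with hU
  set g : (Fin t → Fin t → ℂ) → ENNReal :=
    fun Q => (ℙ : Measure Ω) {ω | Real.log (fdet (Matrix.of Q) (H ω)) < R} with hg
  set S : Set ENNReal := g '' U with hS
  have hSne : S.Nonempty := by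
    refine ⟨g 0, ⟨0, ⟨?_, ?_⟩, rfl⟩⟩
    · exact Matrix.PosSemidef.zero
    · have h0 : (Matrix.of (0 : Fin t → Fin t → ℂ)) = (0 : Matrix (Fin t) (Fin t) ℂ) := rfl
      rw [h0, Matrix.trace_zero]
      simpa using hρ.le
  obtain ⟨u, hu_anti, hu_t, hu_mem⟩ := exists_seq_tendsto_sInf hSne (OrderBot.bddBelow S)
  choose v hvU hvg using fun n => hu_mem n
  obtain ⟨Qs, hQsU, φ, hφmono, hφt⟩ := (isCompact_U' (t := t) ρ hρ.le).tendsto_subseq hvU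
  -- the key inequality : g Qs ≤ sInf S
  set A : ℕ → Set Ω := fun n => {ω | Real.log (fdet (Matrix.of (v (φ n))) (H ω)) < R} with hA
  set B : ℕ → Set Ω := fun n => ⋂ k, ⋂ (_ : n ≤ k), A k with hB
  have hBmono : Monotone B := by
    intro n m hnm x hx
    simp only [hB, Set.mem_iInter] at hx ⊢
    exact fun k hk => hx k (hnm.trans hk)
  have hsub : {ω | Real.log (fdet (Matrix.of Qs) (H ω)) < R} ⊆ ⋃ n, B n := by
    intro ω hω
    have htend : Filter.Tendsto (fun n => Real.log (fdet (Matrix.of (v (φ n))) (H ω)))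
        Filter.atTop (nhds (Real.log (fdet (Matrix.of Qs) (H ω)))) := by
      have h1 : Filter.Tendsto (fun n => fdet (Matrix.of (v (φ n))) (H ω))
          Filter.atTop (nhds (fdet (Matrix.of Qs) (H ω))) :=
        ((continuous_fdet_Q (H ω)).tendsto Qs).comp hφt
      exact ((Real.continuousAt_log (fdet_pos hQsU.1 (H ω)).ne').tendsto).comp h1
    have hev : ∀ᶠ n in Filter.atTop,
        Real.log (fdet (Matrix.of (v (φ n))) (H ω)) < R :=
      htend.eventually_lt_const hω
    rw [Filter.eventually_atTop] at hev
    obtain ⟨n, hn⟩ := hev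
    refine Set.mem_iUnion.2 ⟨n, ?_⟩
    simp only [hB, Set.mem_iInter]
    exact fun k hk => hn k hk
  have hkey : g Qs ≤ sInf S := by
    calc g Qs ≤ (ℙ : Measure Ω) (⋃ n, B n) := measure_mono hsub
    _ = ⨆ n, (ℙ : Measure Ω) (B n) := hBmono.measure_iUnion
    _ ≤ sInf S := by
        refine iSup_le fun n => ?_
        have htend2 : Filter.Tendsto (fun k => u (φ k)) Filter.atTop (nhds (sInf S)) :=
          hu_t.comp hφmono.tendsto_atTop
        refine ge_of_tendsto htend2 ?_
        rw [Filter.eventually_atTop]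
        refine ⟨n, fun k hk => ?_⟩
        calc (ℙ : Measure Ω) (B n) ≤ (ℙ : Measure Ω) (A k) := by
              refine measure_mono ?_
              intro x hx
              simp only [hB, Set.mem_iInter] at hx
              exact hx k hk
        _ = u (φ k) := hvg (φ k)
  refine ⟨Matrix.of Qs, hQsU.1, hQsU.2, ?_⟩
  intro Q' hQ'1 hQ'2
  have hmem' : g (Matrix.of.symm Q') ∈ S := ⟨Matrix.of.symm Q', ⟨hQ'1, hQ'2⟩, rfl⟩
  calc (ℙ : Measure Ω) {ω |
          Real.log (((1 : Matrix (Fin r) (Fin r) ℂ)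
            + (Matrix.of (H ω))ᴴ * Matrix.of Qs * Matrix.of (H ω)).det).re < R}
      = g Qs := rfl
  _ ≤ sInf S := hkey
  _ ≤ g (Matrix.of.symm Q') := sInf_le hmem'
  _ = (ℙ : Measure Ω) {ω |
          Real.log (((1 : Matrix (Fin r) (Fin r) ℂ)
            + (Matrix.of (H ω))ᴴ * Q' * Matrix.of (H ω)).det).re < R} := rfl
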